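/- Let $d$ be a circular decomposable metric on $X=\{1,\dots,n\}$ such that $\sigma$ satisfies Property (⋆), and let $M$ be defined from $\sigma$ as in Definition of $M$. Then $a \prec b \preceq M(a)$ if and only if $d(a,b-1) < d(a,b)$, and $M(a) \prec b \preceq a$ if and only if $d(a,b-1) \geq d(a,b)$. -/
import Mathlib


open Finset

/-- Position of `b` relative to `a` in the clockwise cyclic order on `ZMod n`
(number of clockwise steps from `a` to `b`). -/
def cpos {n : ℕ} (a b : ZMod n) : ℕ := (b - a).val

/-- `a ≺ b ≺ c` in the cyclic order. -/
def btwSS {n : ℕ} (a b c : ZMod n) : Prop := 0 < cpos a b ∧ cpos a b < cpos a c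

/-- `a ≺ b ⪯ c` in the cyclic order. -/
def btwSW {n : ℕ} (a b c : ZMod n) : Prop := 0 < cpos a b ∧ cpos a b ≤ cpos a c

/-- `a ⪯ b ≺ c` in the cyclic order. -/
def btwWS {n : ℕ} (a b c : ZMod n) : Prop := cpos a b < cpos a c

/-- `a ⪯ b ⪯ c` in the cyclic order. -/
def btwWW {n : ℕ} (a b c : ZMod n) : Prop := cpos a b ≤ cpos a c

/-- Circular sum `⊕∑_{i=a}^{b} f i`: the sum of `f` over the indices from `a` to `b`
inclusive, traversed cyclically (wrapping around mod `n`). -/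
noncomputable def csum {n : ℕ} (f : ZMod n → ℝ) (a b : ZMod n) : ℝ :=
  ∑ k ∈ Finset.range ((b - a).val + 1), f (a + (k : ZMod n))

/-- The circular decomposable metric determined by isolation indices `α`:
`d a b = ⊕∑_{i=a+1}^{b} ⊕∑_{j=b+1}^{a} α i j` for `a ≠ b`, and `d a a = 0`. -/
noncomputable def dd {n : ℕ} (α : ZMod n → ZMod n → ℝ) (a b : ZMod n) : ℝ :=
  if a = b then 0 else csum (fun i => csum (fun j => α i j) (b + 1) a) (a + 1) b

section FullSetup

variable {n : ℕ} [NeZero n] (α : ZMod n → ZMod n → ℝ) (σ M : ZMod n → ZMod n)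

/-- `σ c` is the last element `a` of the cyclic sequence `c+1, …, c-1` with
`⊕∑_{i=a+1}^{c} α i c ≥ ⊕∑_{i=c+1}^{a} α i c`. -/
def sigmaSpec : Prop :=
  ∀ c : ZMod n, σ c ≠ c ∧
    (csum (fun i => α i c) (σ c + 1) c ≥ csum (fun i => α i c) (c + 1) (σ c)) ∧
    (∀ a : ZMod n, cpos c (σ c) < cpos c a →
      ¬ (csum (fun i => α i c) (a + 1) c ≥ csum (fun i => α i c) (c + 1) a))

/-- Property (⋆): `a ≺ b ⪯ σ(a)` implies `σ(a) ⪯ σ(b) ≺ a`. -/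
def starProp : Prop := ∀ a b : ZMod n, btwSW a b (σ a) → btwWS (σ a) (σ b) a

/-- `M a` is the last element `m` of the cyclic sequence `a+1, …, a-1`
with `σ(m) ≺ a ≺ m`. -/
def MSpec : Prop :=
  ∀ a : ZMod n, btwSS (σ (M a)) a (M a) ∧
    ∀ m : ZMod n, cpos a (M a) < cpos a m → ¬ btwSS (σ m) a m

end FullSetup

set_option linter.unusedSectionVars false

section Aux
variable {n : ℕ} [NeZero n]

lemma natCast_val' (z : ZMod n) : ((z.val : ℕ) : ZMod n) = z := ZMod.natCast_rightInverse z

lemma zval_inj {x y : ZMod n} (h : x.val = y.val) : x = y := by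
  rw [← natCast_val' x, ← natCast_val' y, h]

lemma cpos_eq (x y : ZMod n) : cpos x y = (y.val + n - x.val) % n := by
  have hx : x.val ≤ y.val + n := by have := ZMod.val_lt x; omega
  have h1 : ((y.val + n - x.val : ℕ) : ZMod n) = y - x := by
    rw [Nat.cast_sub hx]
    push_cast
    rw [natCast_val', natCast_val', ZMod.natCast_self]
    ring
  rw [cpos, ← h1, ZMod.val_natCast]

lemma cpos_spec (x y : ZMod n) :
    (cpos x y + x.val = y.val ∨ cpos x y + x.val = y.val + n) ∧
      cpos x y < n ∧ x.val < n ∧ y.val < n := by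
  have hx := ZMod.val_lt x; have hy := ZMod.val_lt y
  have h := cpos_eq x y
  refine ⟨?_, ?_, hx, hy⟩ <;>
  · rcases lt_or_ge (y.val + n - x.val) n with hlt | hge
    · rw [Nat.mod_eq_of_lt hlt] at h; omega
    · have h2 : (y.val + n - x.val) % n = y.val + n - x.val - n := by
        rw [Nat.mod_eq_sub_mod hge, Nat.mod_eq_of_lt (by omega)]
      omega

lemma cpos_succ {c x : ZMod n} (h : x + 1 ≠ c) : cpos c (x + 1) = cpos c x + 1 := by
  have hn : 0 < n := Nat.pos_of_ne_zero (NeZero.ne n)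
  set z := x - c with hz
  have hzval : z.val < n := ZMod.val_lt z
  have h2 : z.val + 1 < n ∨ z.val + 1 = n := by omega
  have hx1 : x + 1 - c = z + 1 := by rw [hz]; ring
  rcases h2 with h2 | h2
  · have : z + 1 = ((z.val + 1 : ℕ) : ZMod n) := by push_cast [natCast_val']; ring
    unfold cpos
    rw [hx1, this, ZMod.val_cast_of_lt h2, hz]
  · exfalso
    apply h
    have hz1 : z + 1 = 0 := by
      have : z + 1 = ((z.val + 1 : ℕ) : ZMod n) := by push_cast [natCast_val']; ring
      rw [this, h2, ZMod.natCast_self]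
    rw [← sub_eq_zero]
    have h4 : x + 1 - c = 0 := by rw [hx1]; exact hz1
    exact h4

lemma cpos_eq_zero_iff {x y : ZMod n} : cpos x y = 0 ↔ y = x := by
  unfold cpos
  rw [ZMod.val_eq_zero, sub_eq_zero]

lemma sub_one_val {u v : ZMod n} (h : u ≠ v) : (v - u).val = (v - 1 - u).val + 1 := by
  have h0 : v - u ≠ 0 := sub_ne_zero.mpr h.symm
  have h1 : (v - u).val ≠ 0 := fun he => h0 ((ZMod.val_eq_zero _).mp he)
  have h2 : v - 1 - u = v - u - 1 := by ring
  rw [h2]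
  have h3 : (v - u) - 1 = (((v - u).val - 1 : ℕ) : ZMod n) := by
    rw [Nat.cast_sub (by omega), natCast_val']
    push_cast; ring
  rw [h3, ZMod.val_cast_of_lt (by have := ZMod.val_lt (v - u); omega)]
  omega

lemma csum_single (f : ZMod n → ℝ) (u : ZMod n) : csum f u u = f u := by
  unfold csum
  simp

lemma csum_head (f : ZMod n → ℝ) (u v : ZMod n) (h : u ≠ v) :
    csum f u v = f u + csum f (u + 1) v := by
  unfold csum
  have h1 : (v - u).val = (v - (u + 1)).val + 1 := by
    have h2 : v - (u + 1) = v - 1 - u := by ring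
    rw [h2]; exact sub_one_val h
  rw [h1, Finset.sum_range_succ']
  rw [add_comm]
  congr 1
  · simp
  · apply Finset.sum_congr rfl
    intro k _
    congr 1
    push_cast
    ring

lemma csum_tail (f : ZMod n → ℝ) (u v : ZMod n) (h : u ≠ v) :
    csum f u v = csum f u (v - 1) + f v := by
  unfold csum
  rw [sub_one_val h, Finset.sum_range_succ]
  congr 1
  have h2 : (((v - 1 - u).val + 1 : ℕ) : ZMod n) = v - u := by
    rw [← sub_one_val h, natCast_val']
  rw [h2]
  ring_nf

lemma csum_add (f g : ZMod n → ℝ) (u v : ZMod n) :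
    csum (fun x => f x + g x) u v = csum f u v + csum g u v :=
  Finset.sum_add_distrib

lemma csum_nonneg {f : ZMod n → ℝ} (hf : ∀ x, 0 ≤ f x) (u v : ZMod n) : 0 ≤ csum f u v :=
  Finset.sum_nonneg fun _ _ => hf _

lemma csum_congr {f g : ZMod n → ℝ} (h : ∀ x, f x = g x) (u v : ZMod n) :
    csum f u v = csum g u v :=
  Finset.sum_congr rfl fun _ _ => h _

end Aux

section Analytic
variable {n : ℕ} [NeZero n] (α : ZMod n → ZMod n → ℝ)

lemma dd_nonneg (hnn : ∀ i j, 0 ≤ α i j) (a b : ZMod n) : 0 ≤ dd α a b := by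
  unfold dd
  split
  · exact le_refl 0
  · exact csum_nonneg (fun i => csum_nonneg (fun j => hnn i j) _ _) _ _

lemma dd_diff (hsym : ∀ i j, α i j = α j i) (hdiag : ∀ i, α i i = 0)
    (a b : ZMod n) (hab : a ≠ b) :
    dd α a b - dd α a (b - 1) =
      csum (fun i => α i b) (b + 1) a - csum (fun i => α i b) (a + 1) b := by
  have hdd : dd α a b = csum (fun i => csum (fun j => α i j) (b + 1) a) (a + 1) b := if_neg hab
  have e4 : csum (fun j => α b j) (b + 1) a = csum (fun i => α i b) (b + 1) a :=
    csum_congr (fun i => hsym _ _) _ _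
  by_cases h1 : a = b - 1
  · have hb : a + 1 = b := by rw [h1]; ring
    have hdd1 : dd α a (b - 1) = 0 := by rw [← h1]; simp [dd]
    rw [hdd, hdd1, ← hb, csum_single, csum_single, hdiag]
    rw [← hb] at e4
    rw [e4]
  · have ha1 : a + 1 ≠ b := fun he => h1 (by rw [← he]; ring)
    have hdd1 : dd α a (b - 1)
        = csum (fun i => csum (fun j => α i j) ((b - 1) + 1) a) (a + 1) (b - 1) := if_neg h1
    have hb1 : (b - 1) + 1 = b := by ring
    rw [hb1] at hdd1
    have e1 : dd α a b = csum (fun i => csum (fun j => α i j) (b + 1) a) (a + 1) (b - 1)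
        + csum (fun j => α b j) (b + 1) a := by
      rw [hdd, csum_tail _ (a + 1) b ha1]
    have e2 : dd α a (b - 1) = csum (fun i => α i b) (a + 1) (b - 1)
        + csum (fun i => csum (fun j => α i j) (b + 1) a) (a + 1) (b - 1) := by
      rw [hdd1, ← csum_add]
      exact csum_congr (fun i => csum_head (fun j => α i j) b a (fun h => hab h.symm)) _ _
    have e3 : csum (fun i => α i b) (a + 1) b = csum (fun i => α i b) (a + 1) (b - 1) := by
      rw [csum_tail _ (a + 1) b ha1]
      simp [hdiag]
    rw [e1, e2, e3, e4]
    ring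

noncomputable def Fc (c x : ZMod n) : ℝ :=
  csum (fun i => α i c) (x + 1) c - csum (fun i => α i c) (c + 1) x

lemma F_step (hnn : ∀ i j, 0 ≤ α i j) (c x : ZMod n) (hxc : x ≠ c) (hx1 : x + 1 ≠ c) :
    Fc α c (x + 1) ≤ Fc α c x := by
  unfold Fc
  rw [csum_head _ (x + 1) c hx1]
  rw [csum_tail _ (c + 1) (x + 1) (fun h => hxc (add_right_cancel h).symm)]
  simp only [add_sub_cancel_right]
  have := hnn (x + 1) c
  linarith

lemma F_ge (hnn : ∀ i j, 0 ≤ α i j) (c y : ZMod n) :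
    ∀ k : ℕ, ∀ x : ZMod n, x ≠ c → cpos c x + k = cpos c y → Fc α c y ≤ Fc α c x := by
  intro k
  induction k with
  | zero =>
    intro x hx h
    have hxy : x = y := by
      have s1 := cpos_spec c x; have s2 := cpos_spec c y
      exact zval_inj (by omega)
    rw [hxy]
  | succ k ih =>
    intro x hx h
    have hn : 0 < n := Nat.pos_of_ne_zero (NeZero.ne n)
    have s1 := cpos_spec c x; have s2 := cpos_spec c y
    have h1 : x + 1 ≠ c := by
      intro he
      have h2 : cpos c x = n - 1 := by
        have hcast : ((n - 1 : ℕ) : ZMod n) = -1 := by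
          rw [Nat.cast_sub (by omega), Nat.cast_one, ZMod.natCast_self]; ring
        have h3 : x - c = ((n - 1 : ℕ) : ZMod n) := by
          rw [hcast]
          have hxx : x = c - 1 := by rw [← he]; ring
          rw [hxx]; ring
        unfold cpos
        rw [h3, ZMod.val_cast_of_lt (by omega)]
      omega
    have h3 : cpos c (x + 1) = cpos c x + 1 := cpos_succ h1
    have h4 := ih (x + 1) h1 (by omega)
    have h5 := F_step α hnn c x hx h1
    linarith

lemma L_ge_R (hnn : ∀ i j, 0 ≤ α i j) (σ : ZMod n → ZMod n) (hσ : sigmaSpec α σ)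
    (c a : ZMod n) (ha : a ≠ c) (hle : cpos c a ≤ cpos c (σ c)) :
    csum (fun i => α i c) (c + 1) a ≤ csum (fun i => α i c) (a + 1) c := by
  have h0 : 0 ≤ Fc α c (σ c) := by
    have := (hσ c).2.1
    unfold Fc
    linarith
  have h1 := F_ge α hnn c (σ c) (cpos c (σ c) - cpos c a) a ha (by omega)
  unfold Fc at h0 h1
  linarith

end Analytic

/-- For a circular decomposable metric whose `σ` satisfies Property (⋆):
`a ≺ b ⪯ M(a)` iff `d(a,b-1) < d(a,b)`, and `M(a) ≺ b ⪯ a` iff `d(a,b-1) ≥ d(a,b)`. -/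
theorem stmt10 {n : ℕ} [NeZero n] (α : ZMod n → ZMod n → ℝ)
    (hnn : ∀ i j, 0 ≤ α i j) (hsym : ∀ i j, α i j = α j i) (hdiag : ∀ i, α i i = 0)
    (σ M : ZMod n → ZMod n) (hσ : sigmaSpec α σ) (hstar : starProp σ) (hM : MSpec σ M) :
    ∀ a b : ZMod n,
      (btwSW a b (M a) ↔ dd α a (b - 1) < dd α a b) ∧
      (btwSW (M a) b a ↔ dd α a (b - 1) ≥ dd α a b) := by
  have hval : ∀ x y : ZMod n, x ≠ y → x.val ≠ y.val := fun x y h he => h (zval_inj he)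
  intro a b
  have hMa : (M a) ≠ a := by
    have h1 := (hM a).1
    intro h
    rw [h] at h1
    simp only [btwSS] at h1
    omega
  have key1 : btwSW a b (M a) → dd α a (b - 1) < dd α a b := by
    intro hb
    simp only [btwSW] at hb
    have hba : b ≠ a := by
      intro h
      rw [h] at hb
      have : cpos a a = 0 := cpos_eq_zero_iff.mpr rfl
      omega
    have hkey : cpos b (σ b) < cpos b a := by
      have hsb : σ b ≠ b := (hσ b).1
      rcases eq_or_lt_of_le hb.2 with heq | hlt
      · have hbm : b = M a := by
          have s1 := cpos_spec a b; have s2 := cpos_spec a (M a)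
          exact zval_inj (by omega)
        have h1 := (hM a).1
        rw [← hbm] at h1
        simp only [btwSS] at h1
        have s1 := cpos_spec (σ b) a; have s2 := cpos_spec (σ b) b
        have s3 := cpos_spec b (σ b); have s4 := cpos_spec b a
        have v1 := hval _ _ hsb
        omega
      · by_contra hcon
        push_neg at hcon
        have hstep : btwSW b (M a) (σ b) := by
          simp only [btwSW]
          have s1 := cpos_spec a b; have s2 := cpos_spec a (M a)
          have s3 := cpos_spec b (M a); have s4 := cpos_spec b a
          have s5 := cpos_spec b (σ b)
          have v1 := hval _ _ hsb; have v2 := hval _ _ hba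
          omega
        have hout := hstar b (M a) hstep
        simp only [btwWS] at hout
        have h1 := (hM a).1
        simp only [btwSS] at h1
        have s1 := cpos_spec a b; have s2 := cpos_spec a (M a)
        have s3 := cpos_spec b a; have s4 := cpos_spec b (σ b)
        have s5 := cpos_spec (σ b) (σ (M a)); have s6 := cpos_spec (σ b) b
        have s7 := cpos_spec (σ (M a)) a; have s8 := cpos_spec (σ (M a)) (M a)
        have v1 := hval _ _ hsb; have v2 := hval _ _ hba
        omega
    have hR := (hσ b).2.2 a hkey
    push_neg at hR
    have hdiff := dd_diff α hsym hdiag a b (fun h => hba h.symm)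
    linarith
  have key2 : btwSW (M a) b a → dd α a (b - 1) ≥ dd α a b := by
    intro hb
    by_cases hba : b = a
    · rw [hba]
      have h0 : dd α a a = 0 := by simp [dd]
      rw [h0]
      exact dd_nonneg α hnn a (a - 1)
    · simp only [btwSW] at hb
      have h2 : cpos a (M a) < cpos a b := by
        have s1 := cpos_spec (M a) b; have s2 := cpos_spec (M a) a
        have s3 := cpos_spec a b; have s4 := cpos_spec a (M a)
        have v1 := hval _ _ hMa; have v2 := hval _ _ hba
        omega
      have hnb := (hM a).2 b h2
      simp only [btwSS] at hnb
      have hsb : σ b ≠ b := (hσ b).1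
      have hle : cpos b a ≤ cpos b (σ b) := by
        have s1 := cpos_spec (σ b) a; have s2 := cpos_spec (σ b) b
        have s3 := cpos_spec b a; have s4 := cpos_spec b (σ b)
        have v1 := hval _ _ hsb; have v2 := hval _ _ hba
        omega
      have hLR := L_ge_R α hnn σ hσ b a (Ne.symm hba) hle
      have hdiff := dd_diff α hsym hdiag a b (fun h => hba h.symm)
      linarith
  have htri : btwSW a b (M a) ∨ btwSW (M a) b a := by
    simp only [btwSW]
    have s1 := cpos_spec a b; have s2 := cpos_spec a (M a)
    have s3 := cpos_spec (M a) b; have s4 := cpos_spec (M a) a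
    have v1 := hval _ _ hMa
    omega
  constructor
  · refine ⟨key1, fun h => ?_⟩
    rcases htri with h1 | h1
    · exact h1
    · exact absurd h (not_lt.mpr (key2 h1))
  · refine ⟨key2, fun h => ?_⟩
    rcases htri with h1 | h1
    · exact absurd (key1 h1) (not_lt.mpr h)
    · exact h1
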